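/- An FSA S is not strongly periodically detectable if and only if in its detector S_det at least one of the following holds: (5) there are a reachable state q' of S_det and x∈q' such that |q'|>1 and there is a transition sequence x→^{s1}x'→^{s2}x' in S for some s1∈(T_uo)*, s2∈(T_uo)^+, x'∈X; (6) there is a reachable transition cycle of S_det all of whose states have cardinality 2. -/

import Mathlib

/-- A finite-state automaton (FSA) `S = (X, T, X0, δ, Σ, ℓ)`:
states `X`, events `T`, outputs `O` (the alphabet Σ), initial states `init`,
transition relation `delta`, and labeling function `label` where `none` encodes ε. -/
structure FSA (X T O : Type) where
  init : Set X
  delta : X → T → X → Prop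
  label : T → Option O

/-- Composed events of the (ε-extended) self-composition: pairs of observable
events with the same label, unobservable events on the left/right component,
and the added ε event. -/
inductive CEvent (T : Type) where
  | both : T → T → CEvent T
  | left : T → CEvent T
  | right : T → CEvent T
  | eps : CEvent T

namespace FSA

variable {X T O : Type}

/-- Extension of `delta` to finite event sequences: `x →^s x'`. -/
def Run (M : FSA X T O) : X → List T → X → Prop
  | x, [], x' => x = x'
  | x, t :: s, x' => ∃ y, M.delta x t y ∧ Run M y s x'

/-- The label sequence `ℓ(s)` of a finite event sequence. -/
def labelSeq (M : FSA X T O) (s : List T) : List O :=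
  s.filterMap M.label

/-- Membership in `L^ω(S)`: infinite event sequences generated from some initial state. -/
def InLomega (M : FSA X T O) (s : ℕ → T) : Prop :=
  ∃ x : ℕ → X, x 0 ∈ M.init ∧ ∀ i, M.delta (x i) (s i) (x (i + 1))

/-- `s'` is a finite prefix of the infinite sequence `s`. -/
def IsPrefixOf (s' : List T) (s : ℕ → T) : Prop :=
  ∀ i : Fin s'.length, s'.get i = s i

/-- The current-state estimate `M(S,σ)`. -/
def est (M : FSA X T O) (σ : List O) : Set X :=
  {x | ∃ x0 ∈ M.init, ∃ s : List T, M.labelSeq s = σ ∧ M.Run x0 s x}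

/-- Strong periodic detectability (SPD). -/
def SPD (M : FSA X T O) : Prop :=
  ∃ k : ℕ, 0 < k ∧ ∀ s : ℕ → T, M.InLomega s → ∀ s' : List T, IsPrefixOf s' s →
    ∃ s'' : List T, (M.labelSeq s'').length < k ∧ IsPrefixOf (s' ++ s'') s ∧
      (M.est (M.labelSeq (s' ++ s''))).ncard = 1

/-- Strong periodic D-detectability with respect to `Tspec`. -/
def SPDD (M : FSA X T O) (Tspec : Set (X × X)) : Prop :=
  ∃ k : ℕ, 0 < k ∧ ∀ s : ℕ → T, M.InLomega s → ∀ s' : List T, IsPrefixOf s' s →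
    ∃ s'' : List T, (M.labelSeq s'').length < k ∧ IsPrefixOf (s' ++ s'') s ∧
      (M.est (M.labelSeq (s' ++ s'')) ×ˢ M.est (M.labelSeq (s' ++ s''))) ∩ Tspec = ∅

/-- An unobservable transition sequence `x →^s x'` (all events labeled ε). -/
def UnobsRun (M : FSA X T O) (x : X) (s : List T) (x' : X) : Prop :=
  M.Run x s x' ∧ ∀ t ∈ s, M.label t = none

/-- Unobservable reach `UR` of a set of states. -/
def UR (M : FSA X T O) (q : Set X) : Set X :=
  {x' | ∃ x ∈ q, ∃ s : List T, M.UnobsRun x s x'}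

/-- Observable reach `Reach_σ` of a set of states. -/
def ReachO (M : FSA X T O) (σ : O) (q : Set X) : Set X :=
  {x' | ∃ x ∈ q, ∃ t : T, M.delta x t x' ∧ M.label t = some σ}

/-- Initial state `M(S,ε) = UR(X0)` of the observer/detector. -/
def obsInit (M : FSA X T O) : Set X := M.UR M.init

/-- Observer transition `δ_obs(q,σ) = UR(Reach_σ(q))` (defined when nonempty). -/
def obsTrans (M : FSA X T O) (q : Set X) (σ : O) (q' : Set X) : Prop :=
  q' = M.UR (M.ReachO σ q) ∧ q'.Nonempty

/-- Sequences of observer transitions. -/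
def ObsRun (M : FSA X T O) : Set X → List O → Set X → Prop
  | q, [], q' => q = q'
  | q, σ :: w, q' => ∃ q1, M.obsTrans q σ q1 ∧ ObsRun M q1 w q'

/-- Reachable states of the observer `S_obs`. -/
def ObsReachable (M : FSA X T O) (q : Set X) : Prop :=
  ∃ w : List O, M.ObsRun M.obsInit w q

/-- Detector transition relation `δ_det`. -/
def detTrans (M : FSA X T O) (q : Set X) (σ : O) (q' : Set X) : Prop :=
  (1 < (M.UR (M.ReachO σ q)).ncard ∧ q' ⊆ M.UR (M.ReachO σ q) ∧ q'.ncard = 2) ∨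
  ((M.UR (M.ReachO σ q)).ncard = 1 ∧ q' = M.UR (M.ReachO σ q))

/-- Sequences of detector transitions. -/
def DetRun (M : FSA X T O) : Set X → List O → Set X → Prop
  | q, [], q' => q = q'
  | q, σ :: w, q' => ∃ q1, M.detTrans q σ q1 ∧ DetRun M q1 w q'

/-- Reachable states of the detector `S_det`. -/
def DetReachable (M : FSA X T O) (q : Set X) : Prop :=
  ∃ w : List O, M.DetRun M.obsInit w q

/-- The label of a composed event. -/
def cLabel (M : FSA X T O) : CEvent T → Option O
  | CEvent.both t _ => M.label t
  | CEvent.left _ => none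
  | CEvent.right _ => none
  | CEvent.eps => none

/-- The label sequence of a sequence of composed events. -/
def ccLabelSeq (M : FSA X T O) (s : List (CEvent T)) : List O :=
  s.filterMap M.cLabel

/-- Transition relation `δ'` of the self-composition `CC_A(S)`. -/
def ccTrans (M : FSA X T O) : X × X → CEvent T → X × X → Prop
  | p, CEvent.both t t', p' =>
      M.delta p.1 t p'.1 ∧ M.delta p.2 t' p'.2 ∧
      ∃ σ : O, M.label t = some σ ∧ M.label t' = some σ
  | p, CEvent.left t, p' => M.delta p.1 t p'.1 ∧ M.label t = none ∧ p.2 = p'.2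
  | p, CEvent.right t, p' => p.1 = p'.1 ∧ M.label t = none ∧ M.delta p.2 t p'.2
  | _, CEvent.eps, _ => False

/-- Transition relation of the ε-extended self-composition `CC^ε_A(S)`:
all transitions of `CC_A(S)` plus, for `x1 ≠ x2`, the added ε-transitions
`((x1,x2),ε,(x1,x1))` and `((x1,x2),ε,(x2,x2))` under the stated conditions. -/
def ccEpsTrans (M : FSA X T O) (p : X × X) (e : CEvent T) (p' : X × X) : Prop :=
  M.ccTrans p e p' ∨
  (e = CEvent.eps ∧ p.1 ≠ p.2 ∧ (p' = (p.1, p.1) ∨ p' = (p.2, p.2)) ∧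
    ∃ (t' : CEvent T) (r : X × X),
      M.ccTrans p' t' r ∧ ∀ t'' : CEvent T, ¬ M.ccTrans p t'' r)

/-- Sequences of transitions of `CC^ε_A(S)`. -/
def CCRun (M : FSA X T O) : X × X → List (CEvent T) → X × X → Prop
  | p, [], p' => p = p'
  | p, e :: s, p' => ∃ r, M.ccEpsTrans p e r ∧ CCRun M r s p'

/-- Reachable states of `CC^ε_A(S)` (from `X0 × X0`). -/
def CCReachable (M : FSA X T O) (p : X × X) : Prop :=
  ∃ p0 : X × X, p0.1 ∈ M.init ∧ p0.2 ∈ M.init ∧ ∃ s : List (CEvent T), M.CCRun p0 s p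

/-- A state is reachable in `S`. -/
def StateReachable (M : FSA X T O) (x : X) : Prop :=
  ∃ x0 ∈ M.init, ∃ s : List T, M.Run x0 s x

/-- Deadlock-freeness. -/
def DeadlockFree (M : FSA X T O) : Prop :=
  ∀ x : X, M.StateReachable x → ∃ (t : T) (x' : X), M.delta x t x'

/-- Divergence-freeness (promptness): no reachable unobservable transition cycle. -/
def DivergenceFree (M : FSA X T O) : Prop :=
  ∀ x : X, M.StateReachable x → ∀ s : List T, s ≠ [] →
    (∀ t ∈ s, M.label t = none) → ¬ M.Run x s x

end FSA
namespace FSA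

variable {X T O : Type}

theorem run_append (M : FSA X T O) (s u : List T) (x y : X) :
    M.Run x (s ++ u) y ↔ ∃ z, M.Run x s z ∧ M.Run z u y := by
  induction s generalizing x with
  | nil => simp [Run]
  | cons t s ih =>
    simp only [List.cons_append, Run]
    constructor
    · rintro ⟨w, hw, h⟩
      obtain ⟨z, h1, h2⟩ := (ih w).1 h
      exact ⟨z, ⟨w, hw, h1⟩, h2⟩
    · rintro ⟨z, ⟨w, hw, h1⟩, h2⟩
      exact ⟨w, hw, (ih w).2 ⟨z, h1, h2⟩⟩

theorem labelSeq_append (M : FSA X T O) (s u : List T) :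
    M.labelSeq (s ++ u) = M.labelSeq s ++ M.labelSeq u :=
  List.filterMap_append

theorem est_nil (M : FSA X T O) : M.est ([] : List O) = M.obsInit := by
  ext x
  simp only [est, obsInit, UR, UnobsRun, Set.mem_setOf_eq]
  constructor
  · rintro ⟨x0, h0, s, hl, hr⟩
    exact ⟨x0, h0, s, hr, fun t ht => by
      by_contra h
      have : M.label t ≠ none := h
      obtain ⟨o, ho⟩ := Option.ne_none_iff_exists'.1 this
      have : (o : O) ∈ M.labelSeq s := List.mem_filterMap.2 ⟨t, ht, ho⟩
      simp only [labelSeq] at hl this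
      rw [hl] at this
      simp at this⟩
  · rintro ⟨x0, h0, s, ⟨hr, hu⟩⟩
    exact ⟨x0, h0, s, List.filterMap_eq_nil_iff.2 hu, hr⟩

theorem labelSeq_eq_nil (M : FSA X T O) {s : List T} (h : ∀ t ∈ s, M.label t = none) :
    M.labelSeq s = [] := List.filterMap_eq_nil_iff.2 h

theorem decompose_label (M : FSA X T O) (σ : List O) (a : O) :
    ∀ s : List T, M.labelSeq s = σ ++ [a] →
      ∃ s1 t s2, s = s1 ++ t :: s2 ∧ M.labelSeq s1 = σ ∧ M.label t = some a ∧
        ∀ u ∈ s2, M.label u = none := by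
  intro s
  induction s using List.reverseRecOn with
  | nil => intro h; simp [labelSeq] at h
  | append_singleton s0 t ih =>
    intro h
    rw [labelSeq_append] at h
    cases ht : M.label t with
    | none =>
      have : M.labelSeq [t] = [] := by simp [labelSeq, ht]
      rw [this, List.append_nil] at h
      obtain ⟨s1, t', s2, he, h1, h2, h3⟩ := ih h
      exact ⟨s1, t', s2 ++ [t], by simp [he], h1, h2, by
        intro u hu
        rcases List.mem_append.1 hu with hu | hu
        · exact h3 u hu
        · simp at hu; subst hu; exact ht⟩
    | some b =>
      have : M.labelSeq [t] = [b] := by simp [labelSeq, ht]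
      rw [this] at h
      have hb : b = a ∧ M.labelSeq s0 = σ := by
        have := List.append_inj' h rfl
        exact ⟨by simpa using this.2, this.1⟩
      exact ⟨s0, t, [], by simp, hb.2, hb.1 ▸ ht, by simp⟩

theorem est_snoc (M : FSA X T O) (σ : List O) (a : O) :
    M.est (σ ++ [a]) = M.UR (M.ReachO a (M.est σ)) := by
  ext x
  constructor
  · rintro ⟨x0, h0, s, hl, hr⟩
    obtain ⟨s1, t, s2, he, h1, h2, h3⟩ := M.decompose_label σ a s hl
    subst he
    obtain ⟨z, hz1, hz2⟩ := (M.run_append _ _ _ _).1 hr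
    obtain ⟨y, hy1, hy2⟩ := hz2
    exact ⟨y, ⟨z, ⟨x0, h0, s1, h1, hz1⟩, t, hy1, h2⟩, s2, hy2, h3⟩
  · rintro ⟨y, ⟨z, ⟨x0, h0, s1, h1, hz1⟩, t, hy1, h2⟩, s2, hy2, h3⟩
    refine ⟨x0, h0, s1 ++ t :: s2, ?_, ?_⟩
    · rw [labelSeq_append, h1]
      simp only [labelSeq, List.filterMap_cons, h2]
      rw [show List.filterMap M.label s2 = [] from labelSeq_eq_nil M h3]
    · exact (M.run_append _ _ _ _).2 ⟨z, hz1, y, hy1, hy2⟩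

theorem UR_mono (M : FSA X T O) {p q : Set X} (h : p ⊆ q) : M.UR p ⊆ M.UR q := by
  rintro x ⟨y, hy, s, hs⟩; exact ⟨y, h hy, s, hs⟩

theorem ReachO_mono (M : FSA X T O) (a : O) {p q : Set X} (h : p ⊆ q) :
    M.ReachO a p ⊆ M.ReachO a q := by
  rintro x ⟨y, hy, t, ht⟩; exact ⟨y, h hy, t, ht⟩

theorem detTrans_sub (M : FSA X T O) {q q' : Set X} {a : O} (h : M.detTrans q a q') :
    q' ⊆ M.UR (M.ReachO a q) := by
  rcases h with ⟨_, h2, _⟩ | ⟨_, h2⟩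
  · exact h2
  · exact h2.le

theorem detRun_append (M : FSA X T O) (w1 w2 : List O) (q q'' : Set X) :
    M.DetRun q (w1 ++ w2) q'' ↔ ∃ q', M.DetRun q w1 q' ∧ M.DetRun q' w2 q'' := by
  induction w1 generalizing q with
  | nil => simp [DetRun]
  | cons a w ih =>
    simp only [List.cons_append, DetRun]
    constructor
    · rintro ⟨q1, h1, h2⟩
      obtain ⟨q', h3, h4⟩ := (ih q1).1 h2
      exact ⟨q', ⟨q1, h1, h3⟩, h4⟩
    · rintro ⟨q', ⟨q1, h1, h3⟩, h4⟩
      exact ⟨q1, h1, (ih q1).2 ⟨q', h3, h4⟩⟩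

theorem detRun_snoc (M : FSA X T O) {w : List O} {a : O} {q q' q'' : Set X}
    (h1 : M.DetRun q w q') (h2 : M.detTrans q' a q'') : M.DetRun q (w ++ [a]) q'' :=
  (M.detRun_append w [a] q q'').2 ⟨q', h1, q'', h2, rfl⟩

theorem detReachable_step (M : FSA X T O) {q q' : Set X} {a : O}
    (h : M.DetReachable q) (h2 : M.detTrans q a q') : M.DetReachable q' := by
  obtain ⟨w, hw⟩ := h
  exact ⟨w ++ [a], M.detRun_snoc hw h2⟩

theorem detRun_sub_est (M : FSA X T O) :
    ∀ (w : List O) (q0 q : Set X) (σ : List O), M.DetRun q0 w q → q0 ⊆ M.est σ →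
      q ⊆ M.est (σ ++ w) := by
  intro w
  induction w with
  | nil => intro q0 q σ h hsub; cases h; simpa using hsub
  | cons a w ih =>
    rintro q0 q σ ⟨q1, h1, h2⟩ hsub
    have hq1 : q1 ⊆ M.est (σ ++ [a]) := by
      rw [est_snoc]
      exact (M.detTrans_sub h1).trans (M.UR_mono (M.ReachO_mono a hsub))
    have := ih q1 q (σ ++ [a]) h2 hq1
    simpa using this

theorem detReachable_sub_est (M : FSA X T O) {w : List O} {q : Set X}
    (h : M.DetRun M.obsInit w q) : q ⊆ M.est w := by
  have := M.detRun_sub_est w M.obsInit q [] h (by rw [est_nil])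
  simpa using this

end FSA
namespace FSA

variable {X T O : Type} [Fintype X]

theorem est_finite (M : FSA X T O) (σ : List O) : (M.est σ).Finite := Set.toFinite _

theorem one_lt_ncard_of_ne {s : Set X} {a b : X} (ha : a ∈ s) (hb : b ∈ s) (hab : a ≠ b) :
    1 < s.ncard :=
  Set.one_lt_ncard_iff (Set.toFinite s) |>.2 ⟨a, b, ha, hb, hab⟩

theorem exists_ne_of_one_lt_ncard' {s : Set X} (h : 1 < s.ncard) (a : X) :
    ∃ b ∈ s, b ≠ a := Set.exists_ne_of_one_lt_ncard h a

theorem ncard_ge2 {s : Set X} (hne : s.Nonempty) (h : s.ncard ≠ 1) : 1 < s.ncard := by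
  have : 0 < s.ncard := (Set.ncard_pos (Set.toFinite s)).mpr hne
  omega

theorem key (M : FSA X T O) (σ : List O) :
    ((M.est σ).ncard = 1 → M.DetReachable (M.est σ)) ∧
    (∀ x ∈ M.est σ, ∀ w ∈ M.est σ, x ≠ w →
      ∃ q, M.DetReachable q ∧ x ∈ q ∧ w ∈ q ∧ q ⊆ M.est σ) := by
  induction σ using List.reverseRecOn with
  | nil =>
    constructor
    · intro _; rw [est_nil]; exact ⟨[], rfl⟩
    · intro x hx w hw _
      exact ⟨M.obsInit, ⟨[], rfl⟩, by rwa [est_nil] at hx, by rwa [est_nil] at hw,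
        by rw [est_nil]⟩
  | append_singleton σ a ih =>
    have hsnoc := M.est_snoc σ a
    -- helper: a detector-reachable q with z,z' ∈ q (z,z' ∈ est σ) gives transitions
    have main : ∀ x ∈ M.est (σ ++ [a]), ∀ w ∈ M.est (σ ++ [a]), x ≠ w →
        ∃ q, M.DetReachable q ∧ x ∈ q ∧ w ∈ q ∧ q ⊆ M.est (σ ++ [a]) := by
      intro x hx w hw hxw
      -- preimages
      rw [hsnoc] at hx hw
      obtain ⟨yx, ⟨zx, hzx, tx, htx⟩, sx, hsx⟩ := hx
      obtain ⟨yw, ⟨zw, hzw, tw, htw⟩, sw, hsw⟩ := hw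
      -- find q0 reachable containing zx and zw
      have hq0 : ∃ q0, M.DetReachable q0 ∧ zx ∈ q0 ∧ zw ∈ q0 ∧ q0 ⊆ M.est σ := by
        by_cases hcard : (M.est σ).ncard = 1
        · obtain ⟨c, hc⟩ := Set.ncard_eq_one.1 hcard
          refine ⟨M.est σ, ih.1 hcard, hzx, hzw, subset_rfl⟩
        · have h2 : 1 < (M.est σ).ncard := ncard_ge2 ⟨zx, hzx⟩ hcard
          by_cases hzz : zx = zw
          · obtain ⟨v, hv, hvne⟩ := exists_ne_of_one_lt_ncard' h2 zx
            obtain ⟨q0, h1, h2', h3, h4⟩ := ih.2 zx hzx v hv (Ne.symm hvne)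
            exact ⟨q0, h1, h2', hzz ▸ h2', h4⟩
          · obtain ⟨q0, h1, h2', h3, h4⟩ := ih.2 zx hzx zw hzw hzz
            exact ⟨q0, h1, h2', h3, h4⟩
      obtain ⟨q0, hq0r, hzx0, hzw0, hq0sub⟩ := hq0
      have hxR : x ∈ M.UR (M.ReachO a q0) := ⟨yx, ⟨zx, hzx0, tx, htx⟩, sx, hsx⟩
      have hwR : w ∈ M.UR (M.ReachO a q0) := ⟨yw, ⟨zw, hzw0, tw, htw⟩, sw, hsw⟩
      have hRcard : 1 < (M.UR (M.ReachO a q0)).ncard := one_lt_ncard_of_ne hxR hwR hxw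
      have htrans : M.detTrans q0 a {x, w} :=
        Or.inl ⟨hRcard, by rintro z (rfl | rfl); exact hxR; exact hwR, Set.ncard_pair hxw⟩
      refine ⟨{x, w}, M.detReachable_step hq0r htrans, by simp, by simp, ?_⟩
      rw [hsnoc]
      exact (M.detTrans_sub htrans).trans (M.UR_mono (M.ReachO_mono a hq0sub))
    refine ⟨?_, main⟩
    -- singleton case
    intro hcard
    obtain ⟨c, hc⟩ := Set.ncard_eq_one.1 hcard
    have hcmem : c ∈ M.est (σ ++ [a]) := by rw [hc]; exact rfl
    have hx := hcmem
    rw [hsnoc] at hx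
    obtain ⟨yx, ⟨zx, hzx, tx, htx⟩, sx, hsx⟩ := hx
    by_cases hσ : (M.est σ).ncard = 1
    · obtain ⟨c', hc'⟩ := Set.ncard_eq_one.1 hσ
      have hions : M.est σ = {zx} := by
        rw [hc']; rw [hc'] at hzx; simp at hzx; simp [hzx]
      have : M.detTrans (M.est σ) a (M.est (σ ++ [a])) := by
        refine Or.inr ⟨?_, hsnoc⟩
        rw [← hsnoc, hcard]
      exact M.detReachable_step (ih.1 hσ) this
    · have h2 : 1 < (M.est σ).ncard := ncard_ge2 ⟨zx, hzx⟩ hσ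
      obtain ⟨v, hv, hvne⟩ := exists_ne_of_one_lt_ncard' h2 zx
      obtain ⟨q0, hq0r, hzx0, hv0, hq0sub⟩ := ih.2 zx hzx v hv (Ne.symm hvne)
      have hcR : c ∈ M.UR (M.ReachO a q0) := ⟨yx, ⟨zx, hzx0, tx, htx⟩, sx, hsx⟩
      have hsub : M.UR (M.ReachO a q0) ⊆ M.est (σ ++ [a]) := by
        rw [hsnoc]; exact M.UR_mono (M.ReachO_mono a hq0sub)
      have hReq : M.UR (M.ReachO a q0) = M.est (σ ++ [a]) := by
        rw [hc]
        apply Set.eq_singleton_iff_unique_mem.2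
        exact ⟨hcR, fun z hz => by have := hsub hz; rw [hc] at this; exact this⟩
      have : M.detTrans q0 a (M.est (σ ++ [a])) := by
        refine Or.inr ⟨?_, hReq.symm⟩
        rw [hReq, hcard]
      exact M.detReachable_step hq0r this
end FSA
namespace FSA

variable {X T O : Type}

/-- segment of an infinite sequence: `n` entries starting at `a`. -/
def segN (s : ℕ → T) (a n : ℕ) : List T := List.ofFn fun i : Fin n => s (a + i)

@[simp] theorem segN_length (s : ℕ → T) (a n : ℕ) : (segN s a n).length = n := by
  simp [segN]

theorem segN_get (s : ℕ → T) (a n : ℕ) (i : ℕ) (h : i < (segN s a n).length) :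
    (segN s a n).get ⟨i, h⟩ = s (a + i) := by
  simp [segN]

theorem segN_zero (s : ℕ → T) (a : ℕ) : segN s a 0 = [] := rfl

theorem segN_succ (s : ℕ → T) (a n : ℕ) :
    segN s a (n + 1) = segN s a n ++ [s (a + n)] := by
  rw [segN, List.ofFn_succ']
  simp [segN, List.concat_eq_append, Fin.last]

theorem segN_add (s : ℕ → T) (a m n : ℕ) :
    segN s a (m + n) = segN s a m ++ segN s (a + m) n := by
  induction n with
  | zero => simp [segN_zero]
  | succ n ih => rw [show m + (n+1) = (m+n)+1 by omega, segN_succ, ih, segN_succ]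
                 simp [show a + (m + n) = a + m + n by omega]

theorem run_snoc (M : FSA X T O) {x z y : X} {u : List T} {t : T}
    (h1 : M.Run x u z) (h2 : M.delta z t y) : M.Run x (u ++ [t]) y :=
  (M.run_append u [t] x y).2 ⟨z, h1, y, h2, rfl⟩

theorem run_segN (M : FSA X T O) (s : ℕ → T) (xs : ℕ → X)
    (hstep : ∀ i, M.delta (xs i) (s i) (xs (i + 1))) (a : ℕ) :
    ∀ n, M.Run (xs a) (segN s a n) (xs (a + n)) := by
  intro n
  induction n with
  | zero => exact rfl
  | succ n ih => rw [segN_succ]; exact M.run_snoc ih (hstep (a + n))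

/-- a run as a state function -/
theorem runfun (M : FSA X T O) :
    ∀ (u : List T) (x y : X), M.Run x u y →
      ∃ f : ℕ → X, f 0 = x ∧ f u.length = y ∧
        ∀ i (h : i < u.length), M.delta (f i) (u.get ⟨i, h⟩) (f (i + 1)) := by
  intro u
  induction u with
  | nil => intro x y h; cases h; exact ⟨fun _ => x, rfl, rfl, by simp⟩
  | cons t u ih =>
    rintro x y ⟨z, hz, hrun⟩
    obtain ⟨g, hg0, hgl, hgs⟩ := ih z y hrun
    refine ⟨fun i => if i = 0 then x else g (i - 1), rfl, by simp [hgl], ?_⟩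
    rintro (_ | i) h
    · simpa [hg0] using hz
    · simpa using hgs i (by simpa using h)

/-- `n`-fold repetition of a list. -/
def lpow (l : List T) : ℕ → List T
  | 0 => []
  | n + 1 => l ++ lpow l n

theorem lpow_zero (l : List T) : lpow l 0 = [] := rfl

theorem lpow_succ (l : List T) (n : ℕ) : lpow l (n + 1) = l ++ lpow l n := rfl

@[simp] theorem lpow_length (l : List T) (n : ℕ) : (lpow l n).length = n * l.length := by
  induction n with
  | zero => simp [lpow_zero]
  | succ n ih => rw [lpow_succ]; simp [ih]; ring

theorem lpow_add (l : List T) (a b : ℕ) : lpow l (a + b) = lpow l a ++ lpow l b := by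
  induction a with
  | zero => simp [lpow_zero, Nat.zero_add]
  | succ a ih => rw [show a + 1 + b = (a + b) + 1 by omega, lpow_succ, lpow_succ, ih]; simp

theorem labelSeq_lpow (M : FSA X T O) (l : List T) (n : ℕ) :
    M.labelSeq (lpow l n) = lpow (M.labelSeq l) n := by
  induction n with
  | zero => rfl
  | succ n ih => rw [lpow_succ, lpow_succ, labelSeq_append, ih]

theorem lpow_lpow (l : List T) (d n : ℕ) : lpow (lpow l d) n = lpow l (n * d) := by
  induction n with
  | zero => simp [lpow_zero]
  | succ n ih => rw [lpow_succ, ih, show (n+1) * d = d + n * d by ring, lpow_add]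

theorem lpow_getElem (l : List T) (hl : 0 < l.length) :
    ∀ (n : ℕ) (i : ℕ) (h : i < (lpow l n).length),
      (lpow l n)[i] = l[i % l.length]'(Nat.mod_lt _ hl) := by
  intro n
  induction n with
  | zero => intro i h; simp [lpow_zero] at h
  | succ n ih =>
    intro i h
    simp only [lpow_succ] at h ⊢
    by_cases hi : i < l.length
    · rw [List.getElem_append_left hi]
      congr 1
      exact (Nat.mod_eq_of_lt hi).symm
    · push_neg at hi
      rw [List.getElem_append_right hi]
      have h2 : i - l.length < (lpow l n).length := by
        simp only [List.length_append, lpow_length] at h ⊢; omega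
      rw [ih (i - l.length) h2]
      have hmod : (i - l.length) % l.length = i % l.length := by
        conv_rhs => rw [show i = i - l.length + l.length by omega]
        rw [Nat.add_mod_right]
      simp only [hmod]

theorem mod_succ (a n : ℕ) (hn : 0 < n) :
    (a + 1) % n = if a % n + 1 = n then 0 else a % n + 1 := by
  have h := Nat.div_add_mod a n
  by_cases hc : a % n + 1 = n
  · rw [if_pos hc]
    have he : a + 1 = n * (a / n) + n := by omega
    rw [he, Nat.add_mod_right, Nat.mul_mod_right]
  · rw [if_neg hc]
    have hlt : a % n + 1 < n := by have := Nat.mod_lt a hn; omega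
    have he : a + 1 = n * (a / n) + (a % n + 1) := by omega
    rw [he, Nat.mul_add_mod]
    exact Nat.mod_eq_of_lt hlt

/-- Glue an initial run and a loop into an infinite sequence, refuting SPD. -/
theorem glue (M : FSA X T O) {x0 y : X} {u v : List T}
    (hx0 : x0 ∈ M.init) (hu : M.Run x0 u y) (hv : M.Run y v y) (hvne : v ≠ [])
    (H : ∀ s'' : List T,
      (∀ i (h : i < s''.length), s''.get ⟨i, h⟩
        = v.get ⟨i % v.length, Nat.mod_lt _ (List.length_pos_iff.2 hvne)⟩) →
      (M.est (M.labelSeq (u ++ s''))).ncard ≠ 1) :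
    ¬ M.SPD := by
  rintro ⟨k, hk, hspd⟩
  have hn : 0 < v.length := List.length_pos_iff.2 hvne
  obtain ⟨f, hf0, hfL, hfs⟩ := M.runfun u x0 y hu
  obtain ⟨g, hg0, hgn, hgs⟩ := M.runfun v y y hv
  set s : ℕ → T := fun i => if h : i < u.length then u.get ⟨i, h⟩
    else v.get ⟨(i - u.length) % v.length, Nat.mod_lt _ hn⟩ with hs
  set xs : ℕ → X := fun i => if i < u.length then f i else g ((i - u.length) % v.length)
    with hxs
  have hxsL : ∀ i, ¬ i < u.length → xs i = g ((i - u.length) % v.length) := by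
    intro i h; simp [hxs, h]
  have hstep : ∀ i, M.delta (xs i) (s i) (xs (i + 1)) := by
    intro i
    by_cases hi : i < u.length
    · have hsi : s i = u.get ⟨i, hi⟩ := by simp [hs, hi]
      have hxi : xs i = f i := by simp [hxs, hi]
      rw [hsi, hxi]
      by_cases hi1 : i + 1 < u.length
      · have hx1 : xs (i + 1) = f (i + 1) := by simp [hxs, hi1]
        rw [hx1]; exact hfs i hi
      · have hiL : i + 1 = u.length := by omega
        have hx1 : xs (i + 1) = g 0 := by
          rw [hxsL _ (by omega)]; simp [hiL]
        rw [hx1, hg0, ← hfL]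
        have := hfs i hi
        rwa [hiL] at this
    · push_neg at hi
      set r := (i - u.length) % v.length with hr
      have hrlt : r < v.length := Nat.mod_lt _ hn
      have hsi : s i = v.get ⟨r, hrlt⟩ := by simp [hs, not_lt.2 hi, hr]
      have hxi : xs i = g r := hxsL i (not_lt.2 hi)
      have hnext : (i + 1 - u.length) = (i - u.length) + 1 := by omega
      have hmod : (i + 1 - u.length) % v.length = if r + 1 = v.length then 0 else r + 1 := by
        rw [hnext, mod_succ _ _ hn, ← hr]
      rw [hsi, hxi]
      by_cases hrv : r + 1 = v.length
      · have hx1 : xs (i + 1) = g 0 := by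
          rw [hxsL _ (by omega), hmod, if_pos hrv]
        rw [hx1, hg0, ← hgn]
        have := hgs r hrlt
        rwa [hrv] at this
      · have hx1 : xs (i + 1) = g (r + 1) := by
          rw [hxsL _ (by omega), hmod, if_neg hrv]
        rw [hx1]
        exact hgs r hrlt
  have hlom : M.InLomega s := by
    refine ⟨xs, ?_, hstep⟩
    by_cases h0 : 0 < u.length
    · simpa [hxs, h0, hf0] using hx0
    · have hu0 : u = [] := List.length_eq_zero_iff.1 (by omega)
      subst hu0
      have hxy : x0 = y := hu
      have : xs 0 = g 0 := by rw [hxsL _ (by simp)]; simp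
      rw [this, hg0, ← hxy]; exact hx0
  have hupref : IsPrefixOf u s := by
    intro i
    simp [hs, i.isLt]
  obtain ⟨s'', hlen, hpref, hcard⟩ := hspd s hlom u hupref
  refine H s'' ?_ hcard
  intro i h
  have hidx : u.length + i < (u ++ s'').length := by simp; omega
  have h1 : (u ++ s'').get ⟨u.length + i, hidx⟩ = s''.get ⟨i, h⟩ := by
    simp [List.getElem_append_right (show u.length ≤ u.length + i by omega)]
  have h2 := hpref ⟨u.length + i, hidx⟩
  rw [h1] at h2
  rw [h2]
  simp [hs, show ¬ u.length + i < u.length by omega]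

end FSA
namespace FSA

variable {X T O : Type}

theorem labelSeq_prefix (M : FSA X T O) {l1 l2 : List T} (h : l1 <+: l2) :
    M.labelSeq l1 <+: M.labelSeq l2 := by
  obtain ⟨r, rfl⟩ := h
  exact ⟨M.labelSeq r, (M.labelSeq_append l1 r).symm⟩

theorem back (M : FSA X T O) {q q' : Set X} {a : O} (h : M.detTrans q a q') {y : X}
    (hy : y ∈ q') : ∃ z ∈ q, ∃ pth, M.Run z pth y ∧ M.labelSeq pth = [a] := by
  obtain ⟨y0, ⟨z, hz, t, ht1, ht2⟩, su, hsu1, hsu2⟩ := M.detTrans_sub h hy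
  refine ⟨z, hz, t :: su, ⟨y0, ht1, hsu1⟩, ?_⟩
  simp only [labelSeq, List.filterMap_cons, ht2]
  rw [show List.filterMap M.label su = [] from M.labelSeq_eq_nil hsu2]

theorem cond5_not_spd [Fintype X] (M : FSA X T O)
    {q' : Set X} (hreach : M.DetReachable q') (hcard : 1 < q'.ncard)
    {x x' : X} (hx : x ∈ q') {s1 s2 : List T} (h1 : M.UnobsRun x s1 x')
    (h2 : s2 ≠ []) (h3 : M.UnobsRun x' s2 x') : ¬ M.SPD := by
  obtain ⟨w, hw⟩ := hreach
  have hsub := M.detReachable_sub_est hw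
  obtain ⟨x0, hx0, e, he1, he2⟩ := hsub hx
  apply M.glue hx0 ((M.run_append e s1 x0 x').2 ⟨x, he2, h1.1⟩) h3.1 h2
  intro s'' hget
  have hs''lab : ∀ t ∈ s'', M.label t = none := by
    intro t ht
    obtain ⟨i, hti⟩ := List.mem_iff_get.1 ht
    rw [← hti, hget i.1 i.2]
    exact h3.2 _ (List.get_mem _ _)
  have hlab : M.labelSeq ((e ++ s1) ++ s'') = w := by
    rw [labelSeq_append, labelSeq_append, he1, M.labelSeq_eq_nil h1.2,
      M.labelSeq_eq_nil hs''lab]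
    simp
  rw [hlab]
  intro hcon
  have hle : q'.ncard ≤ (M.est w).ncard :=
    Set.ncard_le_ncard hsub (Set.toFinite _)
  omega

theorem cond6_not_spd [Fintype X] (M : FSA X T O)
    {n : ℕ} (hn : 0 < n) (q : Fin (n + 1) → Set X) (σf : Fin n → O)
    (hreach : M.DetReachable (q 0)) (hlast : q 0 = q (Fin.last n))
    (hcyc : ∀ i : Fin n, M.detTrans (q i.castSucc) (σf i) (q i.succ))
    (hc2 : ∀ i, (q i).ncard = 2) : ¬ M.SPD := by
  classical
  set W : List O := List.ofFn σf with hW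
  have hWlen : W.length = n := by simp [hW]
  -- detector runs along prefixes of the cycle
  have step1 : ∀ j (hj : j ≤ n),
      M.DetRun (q 0) (W.take j) (q ⟨j, Nat.lt_succ_of_le hj⟩) := by
    intro j
    induction j with
    | zero =>
      intro hj
      have h0 : (⟨0, Nat.lt_succ_of_le hj⟩ : Fin (n+1)) = 0 := by
        apply Fin.ext; simp
      rw [h0]
      exact rfl
    | succ j ih =>
      intro hj
      have hjn : j < n := hj
      have htake : W.take (j+1) = W.take j ++ [σf ⟨j, hjn⟩] := by
        rw [List.take_succ]
        congr
        rw [List.getElem?_eq_getElem (by omega : j < W.length)]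
        simp [hW]
      rw [htake]
      refine M.detRun_snoc (ih (le_of_lt hjn)) ?_
      have h := hcyc ⟨j, hjn⟩
      have e1 : (Fin.castSucc ⟨j, hjn⟩ : Fin (n+1)) = ⟨j, Nat.lt_succ_of_le (le_of_lt hjn)⟩ := by
        apply Fin.ext; simp
      have e2 : (Fin.succ ⟨j, hjn⟩ : Fin (n+1)) = ⟨j+1, Nat.lt_succ_of_le hj⟩ := by
        apply Fin.ext; simp
      rwa [e1, e2] at h
  have cyc1 : M.DetRun (q 0) W (q 0) := by
    have := step1 n le_rfl
    rw [show W.take n = W by rw [← hWlen]; exact List.take_length] at this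
    rwa [show (⟨n, Nat.lt_succ_of_le le_rfl⟩ : Fin (n+1)) = Fin.last n from Fin.ext rfl,
      ← hlast] at this
  have pref : ∀ m τ, τ <+: lpow W m →
      ∃ qq, M.DetRun (q 0) τ qq ∧ qq.ncard = 2 := by
    intro m
    induction m with
    | zero =>
      intro τ hτ
      have : τ = [] := List.prefix_nil.1 (by simpa [lpow_zero] using hτ)
      subst this
      exact ⟨q 0, rfl, hc2 0⟩
    | succ m ih =>
      intro τ hτ
      rw [lpow_succ] at hτ
      by_cases hlen : τ.length ≤ W.length
      · have hτW : τ <+: W := List.prefix_of_prefix_length_le hτ (W.prefix_append _) hlen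
        have heq : τ = W.take τ.length := List.prefix_iff_eq_take.1 hτW
        have hτn : τ.length ≤ n := by omega
        refine ⟨q ⟨τ.length, Nat.lt_succ_of_le hτn⟩, ?_, hc2 _⟩
        have hst := step1 τ.length hτn
        rwa [← heq] at hst
      · push_neg at hlen
        have hWτ : W <+: τ := List.prefix_of_prefix_length_le (W.prefix_append _) hτ
          (le_of_lt hlen)
        obtain ⟨r, hr⟩ := hWτ
        subst hr
        have hrpre : r <+: lpow W m := by
          obtain ⟨tt, htt⟩ := hτ
          rw [List.append_assoc] at htt
          exact ⟨tt, List.append_cancel_left htt⟩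
        obtain ⟨qq, hqq, h2q⟩ := ih r hrpre
        exact ⟨qq, (M.detRun_append W r _ _).2 ⟨q 0, cyc1, hqq⟩, h2q⟩
  -- backward runs in S along the cycle
  have cycback : ∀ j (hj : j ≤ n), ∀ y ∈ q ⟨j, Nat.lt_succ_of_le hj⟩,
      ∃ z ∈ q 0, ∃ pth, M.Run z pth y ∧ M.labelSeq pth = W.take j := by
    intro j
    induction j with
    | zero =>
      intro hj y hy
      refine ⟨y, ?_, [], rfl, rfl⟩
      rwa [show (0 : Fin (n+1)) = ⟨0, Nat.lt_succ_of_le hj⟩ from Fin.ext (by simp)]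
    | succ j ih =>
      intro hj y hy
      have hjn : j < n := hj
      have h := hcyc ⟨j, hjn⟩
      have e2 : (Fin.succ ⟨j, hjn⟩ : Fin (n+1)) = ⟨j+1, Nat.lt_succ_of_le hj⟩ := by
        apply Fin.ext; simp
      rw [e2] at h
      obtain ⟨z1, hz1, p1, hp1, hl1⟩ := M.back h hy
      have e1 : (Fin.castSucc ⟨j, hjn⟩ : Fin (n+1)) = ⟨j, Nat.lt_succ_of_le (le_of_lt hjn)⟩ := by
        apply Fin.ext; simp
      rw [e1] at hz1
      obtain ⟨z, hz, p0, hp0, hl0⟩ := ih (le_of_lt hjn) z1 hz1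
      refine ⟨z, hz, p0 ++ p1, (M.run_append _ _ _ _).2 ⟨z1, hp0, hp1⟩, ?_⟩
      rw [labelSeq_append, hl0, hl1]
      have htake : W.take (j+1) = W.take j ++ [σf ⟨j, hjn⟩] := by
        rw [List.take_succ]
        congr
        rw [List.getElem?_eq_getElem (by omega : j < W.length)]
        simp [hW]
      rw [htake]
  have full : ∀ y ∈ q 0, ∃ z ∈ q 0, ∃ pth, M.Run z pth y ∧ M.labelSeq pth = W := by
    intro y hy
    have := cycback n le_rfl y (by
      rwa [show (⟨n, Nat.lt_succ_of_le le_rfl⟩ : Fin (n+1)) = Fin.last n from Fin.ext rfl,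
        ← hlast])
    rwa [show W.take n = W by rw [← hWlen]; exact List.take_length] at this
  -- iterate the backward map
  have hq0ne : (q 0).Nonempty := by
    rw [← Set.ncard_pos (Set.toFinite _)]
    rw [hc2 0]; norm_num
  obtain ⟨y0, hy0⟩ := hq0ne
  set F : {x // x ∈ q 0} → {x // x ∈ q 0} :=
    fun y => ⟨(full y.1 y.2).choose, (full y.1 y.2).choose_spec.1⟩ with hF
  have hFp : ∀ y : {x // x ∈ q 0}, ∃ pth, M.Run (F y).1 pth y.1 ∧ M.labelSeq pth = W :=
    fun y => (full y.1 y.2).choose_spec.2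
  set Y : ℕ → {x // x ∈ q 0} := fun r => F^[r] ⟨y0, hy0⟩ with hY
  have comp : ∀ d r, ∃ pth, M.Run (Y (r + d)).1 pth (Y r).1 ∧
      M.labelSeq pth = lpow W d := by
    intro d
    induction d with
    | zero => intro r; exact ⟨[], rfl, rfl⟩
    | succ d ih =>
      intro r
      obtain ⟨p2, hp2, hl2⟩ := ih r
      obtain ⟨p1, hp1, hl1⟩ := hFp (Y (r + d))
      refine ⟨p1 ++ p2, ?_, by rw [labelSeq_append, hl1, hl2, ← lpow_succ]⟩
      refine (M.run_append _ _ _ _).2 ⟨(Y (r + d)).1, ?_, hp2⟩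
      have hit : Y (r + (d + 1)) = F (Y (r + d)) := by
        rw [show r + (d + 1) = (r + d) + 1 by omega, hY]
        exact Function.iterate_succ_apply' F _ _
      rw [hit]
      exact hp1
  -- pigeonhole for a periodic point
  have hcard : Fintype.card X < Fintype.card (Fin (Fintype.card X + 1)) := by simp
  obtain ⟨a, b, hab, heq⟩ := Fintype.exists_ne_map_eq_of_card_lt
    (fun r : Fin (Fintype.card X + 1) => (Y r).1) hcard
  -- wlog a < b
  have hmain : ∀ (a b : ℕ), a < b → (Y a).1 = (Y b).1 → ¬ M.SPD := by
    intro a b hab heq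
    set d := b - a with hd
    have hd1 : 0 < d := by omega
    obtain ⟨pth, hpth, hlp⟩ := comp d a
    rw [show a + d = b by omega] at hpth
    rw [← heq] at hpth
    -- pth : loop at (Y a).1
    have hpne : pth ≠ [] := by
      intro hc
      subst hc
      have : (lpow W d).length = 0 := by rw [← hlp]; rfl
      rw [lpow_length, hWlen] at this
      have := Nat.mul_pos hd1 hn
      omega
    obtain ⟨w0, hw0⟩ := hreach
    obtain ⟨x0, hx0, e, he1, he2⟩ := M.detReachable_sub_est hw0 (Y a).2
    apply M.glue hx0 he2 hpth hpne
    intro s'' hget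
    -- s'' is a prefix of pth repeated
    have hplen : 0 < pth.length := List.length_pos_iff.2 hpne
    set N := s''.length with hN
    have hNle : N ≤ (lpow pth N).length := by
      rw [lpow_length]
      exact Nat.le_mul_of_pos_right _ hplen
    have hs''eq : s'' = (lpow pth N).take N := by
      apply List.ext_get
      · rw [List.length_take]; omega
      · intro i h1 h2
        rw [List.get_eq_getElem (l := (lpow pth N).take N), List.getElem_take]
        simp only [List.get_eq_getElem]
        rw [lpow_getElem pth hplen N i (by simpa using (lt_of_lt_of_le (by omega : i < N) hNle))]
        have := hget i (by omega)
        simp only [List.get_eq_getElem] at this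
        rw [this]
    have hs''pre : s'' <+: lpow pth N := by rw [hs''eq]; exact List.take_prefix _ _
    have hτpre : M.labelSeq s'' <+: lpow W (N * d) := by
      have h1 := M.labelSeq_prefix hs''pre
      rwa [labelSeq_lpow, hlp, lpow_lpow] at h1
    obtain ⟨qq, hqq, hqq2⟩ := pref (N * d) _ hτpre
    have hdet : M.DetRun M.obsInit (w0 ++ M.labelSeq s'') qq :=
      (M.detRun_append _ _ _ _).2 ⟨q 0, hw0, hqq⟩
    have hsub := M.detReachable_sub_est hdet
    have hlab : M.labelSeq (e ++ s'') = w0 ++ M.labelSeq s'' := by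
      rw [labelSeq_append, he1]
    rw [hlab]
    intro hcon
    have hle : qq.ncard ≤ (M.est (w0 ++ M.labelSeq s'')).ncard :=
      Set.ncard_le_ncard hsub (Set.toFinite _)
    omega
  have hne : (a : ℕ) ≠ (b : ℕ) := fun h => hab (Fin.ext h)
  rcases lt_or_gt_of_ne hne with h | h
  · exact hmain a b h heq
  · exact hmain b a h heq.symm

end FSA
namespace FSA

variable {X T O : Type} [Fintype X]

theorem track (M : FSA X T O) :
    ∀ (l : ℕ) (y : ℕ → X) (af : ℕ → O) (σ : ℕ → List O),
      (∀ j ≤ l, y j ∈ M.est (σ j)) →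
      (∀ j ≤ l, 1 < (M.est (σ j)).ncard) →
      (∀ j < l, σ (j+1) = σ j ++ [af j]) →
      (∀ j < l, y (j+1) ∈ M.UR (M.ReachO (af j) {y j})) →
      ∃ w : ℕ → X, (∀ j ≤ l, w j ∈ M.est (σ j) ∧ w j ≠ y j) ∧
        (∀ j < l, M.detTrans {y j, w j} (af j) {y (j+1), w (j+1)}) := by
  intro l
  induction l with
  | zero =>
    intro y af σ hmem hnc _ _
    obtain ⟨b, hb, hbne⟩ := exists_ne_of_one_lt_ncard' (hnc 0 le_rfl) (y 0)
    refine ⟨fun _ => b, ?_, by omega⟩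
    intro j hj
    interval_cases j
    exact ⟨hb, hbne⟩
  | succ l ih =>
    intro y af σ hmem hnc hσ hchain
    obtain ⟨w', hw'1, hw'2⟩ := ih (fun j => y (j+1)) (fun j => af (j+1)) (fun j => σ (j+1))
      (fun j hj => hmem (j+1) (by omega)) (fun j hj => hnc (j+1) (by omega))
      (fun j hj => hσ (j+1) (by omega)) (fun j hj => hchain (j+1) (by omega))
    -- choose the partner at index 0
    have hw'0 := hw'1 0 (by omega)
    have hmem1 : w' 0 ∈ M.UR (M.ReachO (af 0) (M.est (σ 0))) := by
      have := hw'0.1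
      rwa [hσ 0 (by omega), est_snoc] at this
    obtain ⟨ym, ⟨z, hz, t, ht1, ht2⟩, su, hsu⟩ := hmem1
    have hw'UR : w' 0 ∈ M.UR (M.ReachO (af 0) {z}) :=
      ⟨ym, ⟨z, rfl, t, ht1, ht2⟩, su, hsu⟩
    have hne10 : y 1 ≠ w' 0 := (hw'0.2).symm
    have key0 : ∃ w0, w0 ∈ M.est (σ 0) ∧ w0 ≠ y 0 ∧
        M.detTrans {y 0, w0} (af 0) {y 1, w' 0} := by
      by_cases hzy : z = y 0
      · obtain ⟨v, hv, hvne⟩ := exists_ne_of_one_lt_ncard' (hnc 0 (by omega)) (y 0)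
        refine ⟨v, hv, hvne, ?_⟩
        have hy1 : y 1 ∈ M.UR (M.ReachO (af 0) {y 0, v}) := by
          refine M.UR_mono (M.ReachO_mono _ ?_) (hchain 0 (by omega))
          intro u hu; rcases hu with rfl; left; rfl
        have hw0 : w' 0 ∈ M.UR (M.ReachO (af 0) {y 0, v}) := by
          refine M.UR_mono (M.ReachO_mono _ ?_) hw'UR
          intro u hu; rcases hu with rfl; left; exact hzy
        exact Or.inl ⟨one_lt_ncard_of_ne hy1 hw0 hne10,
          by rintro u (rfl | rfl); exact hy1; exact hw0, Set.ncard_pair hne10⟩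
      · refine ⟨z, hz, hzy, ?_⟩
        have hy1 : y 1 ∈ M.UR (M.ReachO (af 0) {y 0, z}) := by
          refine M.UR_mono (M.ReachO_mono _ ?_) (hchain 0 (by omega))
          intro u hu; rcases hu with rfl; left; rfl
        have hw0 : w' 0 ∈ M.UR (M.ReachO (af 0) {y 0, z}) := by
          refine M.UR_mono (M.ReachO_mono _ ?_) hw'UR
          intro u hu; rcases hu with rfl; right; rfl
        exact Or.inl ⟨one_lt_ncard_of_ne hy1 hw0 hne10,
          by rintro u (rfl | rfl); exact hy1; exact hw0, Set.ncard_pair hne10⟩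
    obtain ⟨w0, hw01, hw02, hw03⟩ := key0
    refine ⟨fun j => if j = 0 then w0 else w' (j-1), ?_, ?_⟩
    · rintro (_ | j) hj
      · exact ⟨hw01, hw02⟩
      · simpa using hw'1 j (by omega)
    · rintro (_ | j) hj
      · simpa using hw03
      · simpa using hw'2 j (by omega)

end FSA
namespace FSA

variable {X T O : Type} [Fintype X]

theorem segN_one (s : ℕ → T) (b : ℕ) : segN s b 1 = [s b] := by
  simp [segN, List.ofFn_succ]

theorem not_spd_forward (M : FSA X T O) (hnspd : ¬ M.SPD) :
    ((∃ q' : Set X, M.DetReachable q' ∧ 1 < q'.ncard ∧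
        ∃ x ∈ q', ∃ (x' : X) (s1 s2 : List T),
          M.UnobsRun x s1 x' ∧ s2 ≠ [] ∧ M.UnobsRun x' s2 x') ∨
     (∃ (n : ℕ), 0 < n ∧ ∃ (q : Fin (n + 1) → Set X) (σ : Fin n → O),
        M.DetReachable (q 0) ∧ q 0 = q (Fin.last n) ∧
        (∀ i : Fin n, M.detTrans (q i.castSucc) (σ i) (q i.succ)) ∧
        ∀ i : Fin (n + 1), (q i).ncard = 2)) := by
  classical
  set C := Fintype.card X * Fintype.card X with hC
  set K := C + 3 with hK
  have hK0 : 0 < K := by omega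
  have h1 : ¬ (0 < K ∧ ∀ s : ℕ → T, M.InLomega s → ∀ s' : List T, IsPrefixOf s' s →
      ∃ s'' : List T, (M.labelSeq s'').length < K ∧ IsPrefixOf (s' ++ s'') s ∧
        (M.est (M.labelSeq (s' ++ s''))).ncard = 1) := fun hc => hnspd ⟨K, hc⟩
  push_neg at h1
  obtain ⟨s, hlom, s', hpref, H⟩ := h1 hK0
  obtain ⟨xs, hxs0, hstep⟩ := hlom
  set n0 := s'.length with hn0
  have hseq : s' = segN s 0 n0 := by
    apply List.ext_get (by simp [hn0])
    intro i h1' h2'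
    have := hpref ⟨i, h1'⟩
    rw [this]
    rw [segN_get s 0 n0 i (by simpa using h2')]
    simp
  have hsplit : ∀ c, segN s 0 (n0 + c) = s' ++ segN s n0 c := by
    intro c
    rw [segN_add s 0 n0 c, ← hseq, Nat.zero_add]
  have hrun0 : ∀ m, M.Run (xs 0) (segN s 0 m) (xs m) := by
    intro m
    have := M.run_segN s xs hstep 0 m
    simpa using this
  have hprefseg : ∀ m, IsPrefixOf (segN s 0 m) s := by
    intro m i
    have := segN_get s 0 m i.1 i.2
    simpa using this
  have hest : ∀ c, xs (n0 + c) ∈ M.est (M.labelSeq (segN s 0 (n0 + c))) :=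
    fun c => ⟨xs 0, hxs0, segN s 0 (n0 + c), rfl, hrun0 _⟩
  set cnt : ℕ → ℕ := fun c => (M.labelSeq (segN s n0 c)).length with hcnt
  have hH : ∀ c, cnt c < K → (M.est (M.labelSeq (segN s 0 (n0 + c)))).ncard ≠ 1 := by
    intro c hc
    have hp : IsPrefixOf (s' ++ segN s n0 c) s := by rw [← hsplit]; exact hprefseg _
    have := H (segN s n0 c) hc hp
    rwa [← hsplit] at this
  have hge2 : ∀ c, cnt c < K → 1 < (M.est (M.labelSeq (segN s 0 (n0 + c)))).ncard :=
    fun c hc => ncard_ge2 ⟨_, hest c⟩ (hH c hc)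
  have cnt_mono : ∀ {c c' : ℕ}, c ≤ c' → cnt c ≤ cnt c' := by
    intro c c' h
    simp only [hcnt]
    rw [show c' = c + (c' - c) by omega, segN_add, labelSeq_append, List.length_append]
    omega
  have cnt_succ_none : ∀ c, M.label (s (n0 + c)) = none → cnt (c + 1) = cnt c := by
    intro c h
    simp only [hcnt]
    rw [segN_succ, labelSeq_append]
    simp [labelSeq, h]
  have cnt_succ_some : ∀ c b, M.label (s (n0 + c)) = some b → cnt (c + 1) = cnt c + 1 := by
    intro c b h
    simp only [hcnt]
    rw [segN_succ, labelSeq_append]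
    simp [labelSeq, h]
  have cnt_step : ∀ c, cnt (c + 1) ≤ cnt c + 1 := by
    intro c
    cases hl : M.label (s (n0 + c)) with
    | none => rw [cnt_succ_none c hl]; omega
    | some b => rw [cnt_succ_some c b hl]
  have cnt_zero : cnt 0 = 0 := by simp [hcnt, segN_zero, labelSeq]
  by_cases hC5 : ∃ c, K - 1 ≤ cnt c
  · -- CASE B : detector cycle
    obtain ⟨Mc, hMc⟩ := hC5
    have hπex : ∀ j, j + 1 ≤ K - 1 → ∃ c, cnt c = j ∧ cnt (c + 1) = j + 1 := by
      intro j hj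
      have hPex : ∃ c, j + 1 ≤ cnt c := ⟨Mc, by omega⟩
      have hcs := Nat.find_spec hPex
      have hpos : 0 < Nat.find hPex := by
        rcases Nat.eq_zero_or_pos (Nat.find hPex) with h | h
        · exfalso; rw [h, cnt_zero] at hcs; omega
        · exact h
      have hprev : ¬ j + 1 ≤ cnt (Nat.find hPex - 1) := Nat.find_min hPex (by omega)
      have hstep' := cnt_step (Nat.find hPex - 1)
      rw [show Nat.find hPex - 1 + 1 = Nat.find hPex by omega] at hstep'
      refine ⟨Nat.find hPex - 1, by omega, ?_⟩
      rw [show Nat.find hPex - 1 + 1 = Nat.find hPex by omega]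
      omega
    set π : ℕ → ℕ := fun j => if h : j + 1 ≤ K - 1 then (hπex j h).choose else 0 with hπ
    have hπ1 : ∀ j, j + 1 ≤ K - 1 → cnt (π j) = j ∧ cnt (π j + 1) = j + 1 := by
      intro j h
      simp only [hπ, dif_pos h]
      exact (hπex j h).choose_spec
    haveI hOne : Nonempty O := by
      obtain ⟨c0, h1', h2'⟩ := hπex 0 (by omega)
      cases hl : M.label (s (n0 + c0)) with
      | none => exfalso; have := cnt_succ_none c0 hl; omega
      | some b => exact ⟨b⟩
    set af : ℕ → O := fun j => (M.label (s (n0 + π j))).getD (Classical.arbitrary O) with haf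
    have haf1 : ∀ j, j + 1 ≤ K - 1 → M.label (s (n0 + π j)) = some (af j) := by
      intro j h
      obtain ⟨h1', h2'⟩ := hπ1 j h
      cases hl : M.label (s (n0 + π j)) with
      | none => exfalso; have := cnt_succ_none _ hl; omega
      | some b => rw [haf]; simp [hl]
    have hπmono : ∀ j, j + 2 ≤ K - 1 → π j + 1 ≤ π (j + 1) := by
      intro j h
      obtain ⟨h1', h2'⟩ := hπ1 j (by omega)
      obtain ⟨h3', h4'⟩ := hπ1 (j + 1) h
      by_contra hc
      push_neg at hc
      have := cnt_mono (show π (j + 1) + 1 ≤ π j + 1 by omega)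
      omega
    have hbetween : ∀ j, j + 2 ≤ K - 1 → ∀ i, π j + 1 ≤ i → i < π (j + 1) →
        M.label (s (n0 + i)) = none := by
      intro j h i hi1 hi2
      obtain ⟨h1', h2'⟩ := hπ1 j (by omega)
      obtain ⟨h3', h4'⟩ := hπ1 (j + 1) h
      have ha := cnt_mono hi1
      have hb := cnt_mono (show i + 1 ≤ π (j + 1) by omega)
      cases hl : M.label (s (n0 + i)) with
      | none => rfl
      | some b => exfalso; have := cnt_succ_some i b hl; omega
    set l := C + 1 with hlC
    set yf : ℕ → X := fun j => xs (n0 + π j) with hyf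
    set σg : ℕ → List O := fun j => M.labelSeq (segN s 0 (n0 + π j)) with hσg
    have hmemc : ∀ j, j ≤ l → yf j ∈ M.est (σg j) := fun j _ => hest (π j)
    have hncc : ∀ j, j ≤ l → 1 < (M.est (σg j)).ncard := by
      intro j hj
      apply hge2
      have := (hπ1 j (by omega)).1
      omega
    have hσc : ∀ j, j < l → σg (j + 1) = σg j ++ [af j] := by
      intro j hj
      have hm := hπmono j (by omega)
      simp only [hσg]
      have e1 : segN s 0 (n0 + π (j + 1))
          = segN s 0 (n0 + π j) ++ segN s (0 + (n0 + π j)) (π (j + 1) - π j) := by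
        rw [← segN_add]; congr 1; omega
      have e2 : segN s (0 + (n0 + π j)) (π (j + 1) - π j)
          = segN s (n0 + π j) 1 ++ segN s ((n0 + π j) + 1) (π (j + 1) - π j - 1) := by
        rw [← segN_add]; congr 1 <;> omega
      rw [e1, e2, labelSeq_append, labelSeq_append]
      congr 1
      rw [segN_one]
      have hlab1 : M.labelSeq [s (n0 + π j)] = [af j] := by
        simp [labelSeq, haf1 j (by omega)]
      rw [hlab1]
      have hlab2 : M.labelSeq (segN s ((n0 + π j) + 1) (π (j + 1) - π j - 1)) = [] := by
        apply M.labelSeq_eq_nil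
        intro t ht
        obtain ⟨i, hti⟩ := List.mem_iff_get.1 ht
        rw [← hti, segN_get]
        have hi : i.1 < π (j + 1) - π j - 1 := by simpa using i.2
        have := hbetween j (by omega) (π j + 1 + i.1) (by omega) (by omega)
        rwa [show n0 + (π j + 1 + i.1) = n0 + π j + 1 + i.1 by omega] at this
      rw [hlab2]
      simp
    have hchainc : ∀ j, j < l → yf (j + 1) ∈ M.UR (M.ReachO (af j) {yf j}) := by
      intro j hj
      have hm := hπmono j (by omega)
      refine ⟨xs (n0 + π j + 1), ⟨yf j, rfl, s (n0 + π j), ?_, haf1 j (by omega)⟩,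
        segN s (n0 + π j + 1) (π (j + 1) - (π j + 1)), ?_, ?_⟩
      · exact hstep (n0 + π j)
      · have := M.run_segN s xs hstep (n0 + π j + 1) (π (j + 1) - (π j + 1))
        rwa [show n0 + π j + 1 + (π (j + 1) - (π j + 1)) = n0 + π (j + 1) by omega] at this
      · intro t ht
        obtain ⟨i, hti⟩ := List.mem_iff_get.1 ht
        rw [← hti, segN_get]
        have hi : i.1 < π (j + 1) - (π j + 1) := by simpa using i.2
        have := hbetween j (by omega) (π j + 1 + i.1) (by omega) (by omega)
        rwa [show n0 + (π j + 1 + i.1) = n0 + π j + 1 + i.1 by omega] at this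
    obtain ⟨wf, hwf1, hwf2⟩ := M.track l yf af σg hmemc hncc hσc hchainc
    have hreachpair : ∀ j, 1 ≤ j → j ≤ l → M.DetReachable {yf j, wf j} := by
      intro j
      induction j with
      | zero => omega
      | succ j ihj =>
        intro _ hj2
        by_cases hj0 : j = 0
        · subst hj0
          obtain ⟨Q, hQr, hyQ, hwQ, hQsub⟩ := (M.key (σg 0)).2 (yf 0) (hmemc 0 (by omega))
            (wf 0) ((hwf1 0 (by omega)).1) (Ne.symm (hwf1 0 (by omega)).2)
          have htr := hwf2 0 (by omega)
          have hsub2 : {yf 1, wf 1} ⊆ M.UR (M.ReachO (af 0) Q) := by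
            refine (M.detTrans_sub htr).trans (M.UR_mono (M.ReachO_mono _ ?_))
            rintro u (rfl | rfl)
            · exact hyQ
            · exact hwQ
          have hne : yf 1 ≠ wf 1 := ((hwf1 1 (by omega)).2).symm
          have htr2 : M.detTrans Q (af 0) {yf 1, wf 1} :=
            Or.inl ⟨one_lt_ncard_of_ne (hsub2 (by left; rfl)) (hsub2 (by right; rfl)) hne,
              hsub2, Set.ncard_pair hne⟩
          exact M.detReachable_step hQr htr2
        · exact M.detReachable_step (ihj (by omega) (by omega)) (hwf2 j (by omega))
    have hcard3 : Fintype.card (X × X) < Fintype.card (Fin (C + 1)) := by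
      rw [Fintype.card_prod, Fintype.card_fin]
      omega
    obtain ⟨a, b, hab, habeq⟩ := Fintype.exists_ne_map_eq_of_card_lt
      (fun r : Fin (C + 1) => (yf (r.1 + 1), wf (r.1 + 1))) hcard3
    have main : ∀ (j1 j2 : ℕ), 0 < j1 → j1 < j2 → j2 ≤ l →
        yf j1 = yf j2 → wf j1 = wf j2 →
        (∃ (n : ℕ), 0 < n ∧ ∃ (q : Fin (n + 1) → Set X) (σ : Fin n → O),
          M.DetReachable (q 0) ∧ q 0 = q (Fin.last n) ∧
          (∀ i : Fin n, M.detTrans (q i.castSucc) (σ i) (q i.succ)) ∧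
          ∀ i : Fin (n + 1), (q i).ncard = 2) := by
      intro j1 j2 hj10 hj12 hj2l hy hw
      refine ⟨j2 - j1, by omega, fun r => {yf (j1 + r.1), wf (j1 + r.1)},
        fun r => af (j1 + r.1), ?_, ?_, ?_, ?_⟩
      · simpa using hreachpair j1 (by omega) (by omega)
      · simp only [Fin.val_last, Fin.val_zero, Nat.add_zero]
        rw [show j1 + (j2 - j1) = j2 by omega, hy, hw]
      · intro i
        have hi : j1 + i.1 < l := by have := i.2; omega
        have := hwf2 (j1 + i.1) hi
        simp only [Fin.coe_castSucc, Fin.val_succ]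
        rwa [show j1 + (i.1 + 1) = j1 + i.1 + 1 by omega]
      · intro i
        have hi : j1 + i.1 ≤ l := by have := i.2; omega
        exact Set.ncard_pair ((hwf1 (j1 + i.1) hi).2).symm
    have hyab : yf (a.1 + 1) = yf (b.1 + 1) := congrArg Prod.fst habeq
    have hwab : wf (a.1 + 1) = wf (b.1 + 1) := congrArg Prod.snd habeq
    have hne : (a.1 : ℕ) ≠ b.1 := fun h => hab (Fin.ext h)
    rcases lt_or_gt_of_ne hne with h | h
    · exact Or.inr (main (a.1 + 1) (b.1 + 1) (by omega) (by omega)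
        (by have := b.2; omega) hyab hwab)
    · exact Or.inr (main (b.1 + 1) (a.1 + 1) (by omega) (by omega)
        (by have := a.2; omega) hyab.symm hwab.symm)
  · -- CASE A : unobservable cycle
    push_neg at hC5
    have hstretch : ∃ p, ∀ i, i < Fintype.card X + 1 →
        M.label (s (n0 + (p + i))) = none := by
      by_contra hno
      push_neg at hno
      have grow : ∀ r, r ≤ cnt ((Fintype.card X + 1) * r) := by
        intro r
        induction r with
        | zero => omega
        | succ r ihr =>
          obtain ⟨i, hi, hobs⟩ := hno ((Fintype.card X + 1) * r)
          obtain ⟨b, hb⟩ := Option.ne_none_iff_exists'.1 hobs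
          have h1' : cnt ((Fintype.card X + 1) * r + (i + 1))
              = cnt ((Fintype.card X + 1) * r + i) + 1 := by
            rw [show (Fintype.card X + 1) * r + (i + 1) = ((Fintype.card X + 1) * r + i) + 1
              by omega]
            exact cnt_succ_some _ b (by
              rwa [show n0 + ((Fintype.card X + 1) * r + i)
                = n0 + ((Fintype.card X + 1) * r + i) from rfl,
                show n0 + ((Fintype.card X + 1) * r + i)
                = n0 + ((Fintype.card X + 1) * r + i) from rfl] )
          have h2' : cnt ((Fintype.card X + 1) * r) ≤ cnt ((Fintype.card X + 1) * r + i) :=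
            cnt_mono (by omega)
          have h3' : (Fintype.card X + 1) * r + (i + 1) ≤ (Fintype.card X + 1) * (r + 1) := by
            have : (Fintype.card X + 1) * (r + 1) = (Fintype.card X + 1) * r
              + (Fintype.card X + 1) := by ring
            omega
          have h4' := cnt_mono h3'
          omega
      have hg := grow K
      have hb := hC5 ((Fintype.card X + 1) * K)
      omega
    obtain ⟨p, hp⟩ := hstretch
    have hp' : ∀ i, i < Fintype.card X + 1 → M.label (s (n0 + p + i)) = none := by
      intro i hi
      have := hp i hi
      rwa [show n0 + (p + i) = n0 + p + i by omega] at this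
    have hcard2 : Fintype.card X < Fintype.card (Fin (Fintype.card X + 1)) := by simp
    obtain ⟨a, b, hab, habeq⟩ := Fintype.exists_ne_map_eq_of_card_lt
      (fun r : Fin (Fintype.card X + 1) => xs (n0 + p + r.1)) hcard2
    have main : ∀ (r1 r2 : ℕ), r1 < r2 → r2 ≤ Fintype.card X →
        xs (n0 + p + r1) = xs (n0 + p + r2) →
        (∃ q' : Set X, M.DetReachable q' ∧ 1 < q'.ncard ∧
          ∃ x ∈ q', ∃ (x' : X) (s1 s2 : List T),
            M.UnobsRun x s1 x' ∧ s2 ≠ [] ∧ M.UnobsRun x' s2 x') := by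
      intro r1 r2 hr12 hr2 hxeq
      have hcm : cnt p < K := by have := hC5 p; omega
      have h2 := hge2 p hcm
      obtain ⟨wpt, hwpt, hwptne⟩ := exists_ne_of_one_lt_ncard' h2 (xs (n0 + p))
      obtain ⟨q', hq'r, hxq', hwq', hsubq'⟩ :=
        (M.key _).2 (xs (n0 + p)) (hest p) wpt hwpt (Ne.symm hwptne)
      refine ⟨q', hq'r, one_lt_ncard_of_ne hxq' hwq' (Ne.symm hwptne), xs (n0 + p), hxq',
        xs (n0 + p + r1), segN s (n0 + p) r1, segN s (n0 + p + r1) (r2 - r1), ⟨?_, ?_⟩,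
        ?_, ⟨?_, ?_⟩⟩
      · have := M.run_segN s xs hstep (n0 + p) r1
        exact this
      · intro t ht
        obtain ⟨i, hti⟩ := List.mem_iff_get.1 ht
        rw [← hti, segN_get]
        exact hp' i.1 (by have := i.2; simp at this; omega)
      · have hlen : 0 < (segN s (n0 + p + r1) (r2 - r1)).length := by simp; omega
        intro hc
        rw [hc] at hlen
        simp at hlen
      · have := M.run_segN s xs hstep (n0 + p + r1) (r2 - r1)
        rwa [show n0 + p + r1 + (r2 - r1) = n0 + p + r2 by omega, ← hxeq] at this
      · intro t ht
        obtain ⟨i, hti⟩ := List.mem_iff_get.1 ht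
        rw [← hti, segN_get]
        have hi : i.1 < r2 - r1 := by simpa using i.2
        have := hp' (r1 + i.1) (by omega)
        rwa [show n0 + p + (r1 + i.1) = n0 + p + r1 + i.1 by omega] at this
    have hne : (a.1 : ℕ) ≠ b.1 := fun h => hab (Fin.ext h)
    rcases lt_or_gt_of_ne hne with h | h
    · exact Or.inl (main a.1 b.1 h (by have := b.2; omega) habeq)
    · exact Or.inl (main b.1 a.1 h (by have := a.2; omega) habeq.symm)

end FSA
/-- `S` is not SPD iff in its detector `S_det`: (5) there are a reachable
state `q'` and `x ∈ q'` with `|q'| > 1` and a transition sequence `x →^{s1} x' →^{s2} x'`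
in `S` with `s1 ∈ (T_uo)*`, `s2 ∈ (T_uo)^+`; or (6) there is a reachable transition
cycle of `S_det` all of whose states have cardinality 2. -/
theorem not_spd_iff_detector {X T O : Type} [Fintype X] [Fintype T] [Fintype O]
    (M : FSA X T O) :
    ¬ M.SPD ↔
      ((∃ q' : Set X, M.DetReachable q' ∧ 1 < q'.ncard ∧
          ∃ x ∈ q', ∃ (x' : X) (s1 s2 : List T),
            M.UnobsRun x s1 x' ∧ s2 ≠ [] ∧ M.UnobsRun x' s2 x') ∨
       (∃ (n : ℕ), 0 < n ∧ ∃ (q : Fin (n + 1) → Set X) (σ : Fin n → O),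
          M.DetReachable (q 0) ∧ q 0 = q (Fin.last n) ∧
          (∀ i : Fin n, M.detTrans (q i.castSucc) (σ i) (q i.succ)) ∧
          ∀ i : Fin (n + 1), (q i).ncard = 2)) := by
  constructor
  · exact fun h => M.not_spd_forward h
  · rintro (⟨q', hr, hc, x, hx, x', s1, s2, h1, h2, h3⟩ |
      ⟨n, hn, q, σ, hreach, hlast, hcyc, hc2⟩)
    · exact M.cond5_not_spd hr hc hx h1 h2 h3
    · exact M.cond6_not_spd hn q σ hreach hlast hcyc hc2
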